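/- Let $a \le b$ be reals, $w > 0$, and let $z$ be uniformly distributed on $[0, w]$. Then the probability that $\lfloor (a - z)/w \rfloor \ne \lfloor (b - z)/w \rfloor$ equals $\min((b-a)/w, 1)$. -/

import Mathlib

open Set

/-- Continuous Fréchet distance between two curves parametrized on `[0,1]`. -/
noncomputable def frechetDist {E : Type*} [PseudoMetricSpace E] (f g : ℝ → E) : ℝ :=
  sInf { r : ℝ | ∃ φ ψ : ℝ → ℝ,
    ContinuousOn φ (Set.Icc 0 1) ∧ ContinuousOn ψ (Set.Icc 0 1) ∧
    MonotoneOn φ (Set.Icc 0 1) ∧ MonotoneOn ψ (Set.Icc 0 1) ∧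
    φ 0 = 0 ∧ φ 1 = 1 ∧ ψ 0 = 0 ∧ ψ 1 = 1 ∧
    ∀ t ∈ Set.Icc (0:ℝ) 1, dist (f (φ t)) (g (ψ t)) ≤ r }

/-- The directed line segment from `a` to `b` as a curve on `[0,1]`. -/
def seg {E : Type*} [AddCommGroup E] [Module ℝ E] (a b : E) : ℝ → E :=
  fun s => (1 - s) • a + s • b

/-- Polygonal curve with vertices `p 0, …, p n`, parametrized on `[0,1]`. -/
noncomputable def polyline {E : Type*} [AddCommGroup E] [Module ℝ E] {n : ℕ}
    (p : Fin (n + 1) → E) (s : ℝ) : E :=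
  let u : ℝ := s * n
  let i : ℕ := min ⌊u⌋₊ (n - 1)
  (1 - (u - i)) • p ⟨min i n, Nat.lt_succ_of_le (Nat.min_le_right _ _)⟩
    + (u - i) • p ⟨min (i + 1) n, Nat.lt_succ_of_le (Nat.min_le_right _ _)⟩

/-- Polygonal curve through the points of a list. -/
noncomputable def polylineL {E : Type*} [AddCommGroup E] [Module ℝ E] (l : List E) : ℝ → E :=
  polyline (n := l.length - 1) (fun i => l.getD i.val 0)

/-- `τ` restricted to `[0,1]` is the polygonal curve with vertices
`τ (t 0), …, τ (t m)` at parameters `0 = t 0 < ⋯ < t m = 1`. -/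
def IsPolylineOn (τ : ℝ → ℝ) (m : ℕ) (t : ℕ → ℝ) : Prop :=
  t 0 = 0 ∧ t m = 1 ∧ (∀ i < m, t i < t (i + 1)) ∧
  ∀ i < m, ∀ s, t i ≤ s → s ≤ t (i + 1) →
    τ s = τ (t i) + (s - t i) / (t (i + 1) - t i) * (τ (t (i + 1)) - τ (t i))

/-- `s` is the parameter of a vertex (local extremum) of the time series `τ`. -/
def VertexAt (τ : ℝ → ℝ) (s : ℝ) : Prop :=
  s ∈ Set.Icc (0:ℝ) 1 ∧
    (IsLocalMaxOn τ (Set.Icc 0 1) s ∨ IsLocalMinOn τ (Set.Icc 0 1) s)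

/-- A `δ`-signature of `τ : [0,1] → ℝ`, given by parameters
`0 = t 0 < t 1 < ⋯ < t ℓ = 1` (so the signature has `ℓ + 1` vertices and `ℓ ≥ 1` edges);
the signature curve itself is `polyline (fun i => τ (t i))`. -/
structure IsDeltaSignature (δ : ℝ) (τ : ℝ → ℝ) (ℓ : ℕ) (t : ℕ → ℝ) : Prop where
  one_le : 1 ≤ ℓ
  mono : ∀ i < ℓ, t i < t (i + 1)
  start : t 0 = 0
  finish : t ℓ = 1
  nondeg : ∀ i, 1 ≤ i → i < ℓ →
    τ (t i) ∉ Set.uIcc (τ (t (i - 1))) (τ (t (i + 1)))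
  dir_up : ∀ i < ℓ, τ (t i) < τ (t (i + 1)) →
    ∀ a b, t i ≤ a → a ≤ b → b ≤ t (i + 1) → τ a - τ b ≤ 2 * δ
  dir_down : ∀ i < ℓ, τ (t (i + 1)) < τ (t i) →
    ∀ a b, t i ≤ a → a ≤ b → b ≤ t (i + 1) → τ b - τ a ≤ 2 * δ
  minedge_int : ∀ i, 1 ≤ i → i ≤ ℓ - 2 → 2 * δ < |τ (t (i + 1)) - τ (t i)|
  minedge_bnd : ∀ i < ℓ, (i = 0 ∨ i = ℓ - 1) → δ < |τ (t (i + 1)) - τ (t i)|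
  range_int : ∀ i, 1 ≤ i → i ≤ ℓ - 2 → ∀ s, t i ≤ s → s ≤ t (i + 1) →
    τ s ∈ Set.uIcc (τ (t i)) (τ (t (i + 1)))
  range_first : 2 ≤ ℓ → ∀ s, t 0 ≤ s → s ≤ t 1 →
    τ s ∈ Set.uIcc (τ (t 0)) (τ (t 1)) ∪ Set.Icc (τ (t 0) - δ) (τ (t 0) + δ)
  range_last : 2 ≤ ℓ → ∀ s, t (ℓ - 1) ≤ s → s ≤ t ℓ →
    τ s ∈ Set.uIcc (τ (t (ℓ - 1))) (τ (t ℓ)) ∪ Set.Icc (τ (t ℓ) - δ) (τ (t ℓ) + δ)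
  range_single : ℓ = 1 → ∀ s, (0:ℝ) ≤ s → s ≤ 1 →
    τ s ∈ Set.uIcc (τ (t 0)) (τ (t 1)) ∪ Set.Icc (τ (t 0) - δ) (τ (t 0) + δ)
      ∪ Set.Icc (τ (t 1) - δ) (τ (t 1) + δ)

/-- One step of a traversal: each index advances by 0 or 1, at least one advances. -/
def TravStep (a b : ℕ × ℕ) : Prop :=
  a.1 ≤ b.1 ∧ b.1 ≤ a.1 + 1 ∧ a.2 ≤ b.2 ∧ b.2 ≤ a.2 + 1 ∧ a ≠ b

/-- A traversal of two point sequences of lengths `m` and `k` (0-based indices). -/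
def IsTraversal (m k : ℕ) (T : List (ℕ × ℕ)) : Prop :=
  T.head? = some (0, 0) ∧ T.getLast? = some (m - 1, k - 1) ∧ List.Chain' TravStep T

/-- Discrete Fréchet distance between the point sequences
`p 0, …, p (m-1)` and `q 0, …, q (k-1)`. -/
noncomputable def ddF {E : Type*} [PseudoMetricSpace E] (m k : ℕ) (p q : ℕ → E) : ℝ :=
  sInf { r : ℝ | ∃ T : List (ℕ × ℕ), IsTraversal m k T ∧
    ∀ ij ∈ T, dist (p ij.1) (q ij.2) ≤ r }

/-- The subsequence of local extrema (vertex sequence) of a list of values. -/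
def vertexSeq {α : Type*} [LinearOrder α] : List α → List α
  | [] => []
  | [a] => [a]
  | [a, b] => [a, b]
  | a :: b :: c :: rest =>
    if (a ≤ b ∧ b ≤ c) ∨ (c ≤ b ∧ b ≤ a) then vertexSeq (a :: c :: rest)
    else a :: vertexSeq (b :: c :: rest)
termination_by l => l.length

open MeasureTheory

lemma floor_ne_iff_aux (x y : ℝ) (hxy : x ≤ y) :
    ⌊x⌋ ≠ ⌊y⌋ ↔ ∃ k : ℤ, x < k ∧ (k : ℝ) ≤ y := by
  constructor
  · intro h
    refine ⟨⌊y⌋, ?_, Int.floor_le y⟩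
    have h1 : ⌊x⌋ < ⌊y⌋ := lt_of_le_of_ne (Int.floor_le_floor hxy) h
    have h2 := Int.lt_floor_add_one x
    have : (⌊x⌋ : ℝ) + 1 ≤ (⌊y⌋ : ℝ) := by exact_mod_cast h1
    linarith
  · rintro ⟨k, hk1, hk2⟩
    have h1 : ⌊x⌋ < k := Int.floor_lt.mpr hk1
    have h2 : k ≤ ⌊y⌋ := Int.le_floor.mpr hk2
    omega

lemma aux_measure (a b w : ℝ) (hab : a ≤ b) (hw : 0 < w) (ha : 0 ≤ a) (haw : a < w) :
    volume (Icc 0 w ∩ {z : ℝ | ⌊(a - z) / w⌋ ≠ ⌊(b - z) / w⌋})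
      = ENNReal.ofReal (min (b - a) w) := by
  have hSiff : ∀ z : ℝ, (⌊(a - z) / w⌋ ≠ ⌊(b - z) / w⌋) ↔
      ∃ k : ℤ, a - z < k * w ∧ (k : ℝ) * w ≤ b - z := by
    intro z
    rw [floor_ne_iff_aux _ _ (by apply div_le_div_of_nonneg_right (by linarith) hw.le <;> linarith)]
    constructor
    · rintro ⟨k, h1, h2⟩
      exact ⟨k, (div_lt_iff₀ hw).mp h1, (le_div_iff₀ hw).mp h2⟩
    · rintro ⟨k, h1, h2⟩
      exact ⟨k, (div_lt_iff₀ hw).mpr h1, (le_div_iff₀ hw).mpr h2⟩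
  rcases le_or_gt w (b - a) with hba | hba
  · have hall : Icc 0 w ∩ {z : ℝ | ⌊(a - z) / w⌋ ≠ ⌊(b - z) / w⌋} = Icc 0 w := by
      apply Set.inter_eq_left.mpr
      intro z _
      rw [mem_setOf_eq, hSiff z]
      refine ⟨⌊(b - z) / w⌋, ?_, ?_⟩
      · have h1 := Int.sub_one_lt_floor ((b - z) / w)
        have h2 : (a - z) / w ≤ (b - z) / w - 1 := by
          rw [div_sub' hw.ne', div_le_div_iff₀ hw hw]
          nlinarith
        have h3 : (a - z) / w < (⌊(b - z) / w⌋ : ℝ) := by linarith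
        calc a - z = (a - z) / w * w := by field_simp
        _ < (⌊(b - z) / w⌋ : ℝ) * w := by exact mul_lt_mul_of_pos_right h3 hw
      · calc (⌊(b - z) / w⌋ : ℝ) * w ≤ (b - z) / w * w :=
            mul_le_mul_of_nonneg_right (Int.floor_le _) hw.le
        _ = b - z := by field_simp
    rw [hall, Real.volume_Icc, sub_zero, min_eq_right hba]
  · have hb2 : b < 2 * w := by linarith
    have hIcc : volume (Icc 0 w ∩ {z : ℝ | ⌊(a - z) / w⌋ ≠ ⌊(b - z) / w⌋})
        = volume (Ioo 0 w ∩ {z : ℝ | ⌊(a - z) / w⌋ ≠ ⌊(b - z) / w⌋}) := by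
      refine (measure_congr (Filter.EventuallyEq.inter MeasureTheory.Ioo_ae_eq_Icc
        (Filter.EventuallyEq.refl _ _))).symm
    rw [hIcc]
    have hkey : Ioo 0 w ∩ {z : ℝ | ⌊(a - z) / w⌋ ≠ ⌊(b - z) / w⌋}
        = Ioo 0 w ∩ (Ioc a b ∪ Iic (b - w)) := by
      ext z
      simp only [mem_inter_iff, mem_setOf_eq, mem_Ioo, mem_union, mem_Ioc, mem_Iic]
      constructor
      · rintro ⟨⟨hz0, hzw⟩, hS⟩
        refine ⟨⟨hz0, hzw⟩, ?_⟩
        obtain ⟨k, h1, h2⟩ := (hSiff z).mp hS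
        have hk2 : (k : ℝ) < 2 := by nlinarith
        have hk0 : (-1 : ℝ) < (k : ℝ) := by nlinarith
        have hk2' : k < 2 := by exact_mod_cast hk2
        have hk0' : (-1 : ℤ) < k := by exact_mod_cast hk0
        interval_cases k
        · left
          push_cast at h1 h2
          constructor <;> linarith
        · right
          push_cast at h1 h2
          linarith
      · rintro ⟨⟨hz0, hzw⟩, hU⟩
        refine ⟨⟨hz0, hzw⟩, ?_⟩
        rw [hSiff z]
        rcases hU with ⟨h1, h2⟩ | h1
        · exact ⟨0, by push_cast; linarith, by push_cast; linarith⟩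
        · exact ⟨1, by push_cast; linarith, by push_cast; linarith⟩
    rw [hkey, min_eq_left hba.le]
    rcases le_or_gt b w with hbw | hbw
    · have hsub1 : Ioo a b ⊆ Ioo 0 w ∩ (Ioc a b ∪ Iic (b - w)) := by
        rintro z ⟨h1, h2⟩
        exact ⟨⟨by linarith, by linarith⟩, Or.inl ⟨h1, h2.le⟩⟩
      have hsub2 : Ioo 0 w ∩ (Ioc a b ∪ Iic (b - w)) ⊆ Ioc a b := by
        rintro z ⟨⟨h1, h2⟩, h3 | h3⟩
        · exact h3
        · exfalso; have h4 : z ≤ b - w := h3; linarith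
      refine le_antisymm ?_ ?_
      · calc volume (Ioo 0 w ∩ (Ioc a b ∪ Iic (b - w))) ≤ volume (Ioc a b) :=
            measure_mono hsub2
        _ = ENNReal.ofReal (b - a) := Real.volume_Ioc
      · calc ENNReal.ofReal (b - a) = volume (Ioo a b) := Real.volume_Ioo.symm
        _ ≤ _ := measure_mono hsub1
    · have heq : Ioo 0 w ∩ (Ioc a b ∪ Iic (b - w)) = Ioo a w ∪ Ioc 0 (b - w) := by
        ext z
        simp only [mem_inter_iff, mem_Ioo, mem_union, mem_Ioc, mem_Iic]
        constructor
        · rintro ⟨⟨h1, h2⟩, ⟨h3, h4⟩ | h3⟩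
          · exact Or.inl ⟨h3, h2⟩
          · exact Or.inr ⟨h1, h3⟩
        · rintro (⟨h1, h2⟩ | ⟨h1, h2⟩)
          · exact ⟨⟨by linarith, h2⟩, Or.inl ⟨h1, by linarith⟩⟩
          · exact ⟨⟨h1, by linarith⟩, Or.inr h2⟩
      rw [heq, measure_union ?_ measurableSet_Ioc, Real.volume_Ioo, Real.volume_Ioc,
        ← ENNReal.ofReal_add (by linarith) (by linarith), sub_zero]
      · congr 1; ring
      · rw [Set.disjoint_left]
        rintro z ⟨h1, _⟩ ⟨_, h2⟩
        linarith

open MeasureTheory ProbabilityTheory in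
/-- a randomly shifted grid of width `w` separates `a ≤ b` with
probability exactly `min ((b-a)/w) 1`. -/
theorem grid_separation_prob_eq (a b w : ℝ) (hab : a ≤ b) (hw : 0 < w) :
    (volume[|Set.Icc (0:ℝ) w]) {z | ⌊(a - z) / w⌋ ≠ ⌊(b - z) / w⌋}
      = ENNReal.ofReal (min ((b - a) / w) 1) := by
  set m : ℤ := ⌊a / w⌋ with hm
  have hset : {z : ℝ | ⌊(a - z) / w⌋ ≠ ⌊(b - z) / w⌋}
      = {z : ℝ | ⌊(a - m * w - z) / w⌋ ≠ ⌊(b - m * w - z) / w⌋} := by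
    ext z
    simp only [mem_setOf_eq]
    have h1 : (a - z) / w = (a - m * w - z) / w + m := by field_simp; ring
    have h2 : (b - z) / w = (b - m * w - z) / w + m := by field_simp; ring
    rw [h1, h2, Int.floor_add_intCast, Int.floor_add_intCast]
    omega
  rw [ProbabilityTheory.cond_apply measurableSet_Icc, hset,
    aux_measure _ _ w (by linarith) hw (Int.sub_floor_div_mul_nonneg a hw)
      (Int.sub_floor_div_mul_lt a hw)]
  have hsub : b - ↑m * w - (a - ↑m * w) = b - a := by ring
  rw [hsub, Real.volume_Icc, sub_zero]
  have hmin : min ((b - a) / w) 1 = min (b - a) w / w := by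
    rw [← div_self hw.ne', min_div_div_right hw.le]
  rw [hmin, ENNReal.ofReal_div_of_pos hw, div_eq_mul_inv, mul_comm]
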